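/- Let v_1,…,v_m be monomials in K[x_2,…,x_n] (not involving x_1), let a be a positive integer, and set I = (x_1^a v_1, v_2,…,v_m) and I' = (x_1^{a+1} v_1, v_2,…,v_m). Let g ∈ ℕ^n with x^g = lcm(x_1^a v_1, v_2,…,v_m) (so g(1) = a) and g' = g + e_1. Suppose P_{I'}^{g'} = ⋃_{i=1}^r [c'_i, d'_i] is a partition of P_{I'}^{g'} into pairwise disjoint intervals. Define c_i = c'_i if c'_i(1) ≤ a and c_i = c'_i − e_1 if c'_i(1) = a+1, and define d_i = d'_i if d'_i(1) < a and d_i = d'_i − e_1 if d'_i(1) ≥ a. Then the nonempty intervals among [c_1,d_1],…,[c_r,d_r] form a partition of P_I^g into pairwise disjoint intervals, and ρ_g(d_i) = ρ_{g'}(d'_i) for all i ∈ [r]. -/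
import Mathlib


/-- The set `P_I^g` of the characteristic poset of the monomial ideal
`I = (w₁, v_1, …, v_m)` (identifying monomials with their exponent vectors):
all `σ ≤ g` such that some generator divides `x^σ`. -/
def charPoset {n m : ℕ} (w₁ : Fin n → ℕ) (v : Fin m → Fin n → ℕ)
    (g : Fin n → ℕ) : Set (Fin n → ℕ) :=
  {σ | σ ≤ g ∧ (w₁ ≤ σ ∨ ∃ i, v i ≤ σ)}

/-- `ρ_g(d) = #{j : d j = g j}`. -/
def rho {n : ℕ} (g d : Fin n → ℕ) : ℕ :=
  (Finset.univ.filter fun j => d j = g j).card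

/-- Transfer of a partition of `P_{I'}^{g'}` to a partition of `P_I^g`, where
`I = (x₁^a v₁, v₂, …, v_m)`, `I' = (x₁^{a+1} v₁, v₂, …, v_m)`, `x^g = lcm` of the
generators of `I` and `g' = g + e₁`: setting `cᵢ = c'ᵢ` if `c'ᵢ(1) ≤ a`,
`c'ᵢ - e₁` if `c'ᵢ(1) = a + 1`, and `dᵢ = d'ᵢ` if `d'ᵢ(1) < a`, `d'ᵢ - e₁` if
`d'ᵢ(1) ≥ a`, the nonempty intervals among the `[cᵢ, dᵢ]` partition `P_I^g`
and `ρ_g(dᵢ) = ρ_{g'}(d'ᵢ)`. -/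
theorem partition_transfer_down (n : ℕ) (hn : 2 ≤ n)
    (m : ℕ) (v₁ : Fin n → ℕ) (v : Fin m → Fin n → ℕ)
    (hv₁ : v₁ ⟨0, by omega⟩ = 0) (hv : ∀ i, v i ⟨0, by omega⟩ = 0)
    (a : ℕ) (ha : 0 < a)
    (e₁ : Fin n → ℕ) (he₁ : e₁ = fun j => if j = (⟨0, by omega⟩ : Fin n) then 1 else 0)
    (g : Fin n → ℕ)
    (hg : ∀ j, g j = max ((a • e₁ + v₁) j) (Finset.univ.sup fun i => v i j))
    (r : ℕ) (c' d' : Fin r → (Fin n → ℕ))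
    (hcd' : ∀ i, c' i ≤ d' i)
    (hcover : (⋃ i, Set.Icc (c' i) (d' i)) = charPoset ((a + 1) • e₁ + v₁) v (g + e₁))
    (hdisj : Pairwise (Function.onFun Disjoint fun i => Set.Icc (c' i) (d' i)))
    (c d : Fin r → (Fin n → ℕ))
    (hc : ∀ i, c i = if c' i ⟨0, by omega⟩ ≤ a then c' i else c' i - e₁)
    (hd : ∀ i, d i = if d' i ⟨0, by omega⟩ < a then d' i else d' i - e₁) :
    (⋃ i, Set.Icc (c i) (d i)) = charPoset (a • e₁ + v₁) v g ∧
    Pairwise (Function.onFun Disjoint fun i => Set.Icc (c i) (d i)) ∧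
    ∀ i, rho g (d i) = rho (g + e₁) (d' i) := by
  have hn0 : 0 < n := by omega
  set z : Fin n := ⟨0, hn0⟩ with hzdef
  have hv₁' : v₁ z = 0 := hv₁
  have hv' : ∀ i, v i z = 0 := hv
  have hcz : ∀ i, c i = if c' i z ≤ a then c' i else c' i - e₁ := hc
  have hdz : ∀ i, d i = if d' i z < a then d' i else d' i - e₁ := hd
  have he₁z : e₁ z = 1 := by rw [he₁]; exact if_pos rfl
  have he₁j : ∀ j : Fin n, j ≠ z → e₁ j = 0 := fun j hj => by
    rw [he₁]; exact if_neg hj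
  have hsup : (Finset.univ.sup fun i => v i z) = 0 :=
    Nat.le_zero.mp (Finset.sup_le fun i _ => (hv' i).le)
  have hgz : g z = a := by
    rw [hg, hsup]
    simp [Pi.add_apply, Pi.smul_apply, smul_eq_mul, he₁z, hv₁']
  have hge : (g + e₁) z = a + 1 := by simp [Pi.add_apply, hgz, he₁z]
  have hgej : ∀ j, j ≠ z → (g + e₁) j = g j := fun j hj => by
    simp [Pi.add_apply, he₁j j hj]
  have hwz : (a • e₁ + v₁) z = a := by
    simp [Pi.add_apply, Pi.smul_apply, smul_eq_mul, he₁z, hv₁']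
  have hwz' : ((a + 1) • e₁ + v₁) z = a + 1 := by
    simp [Pi.add_apply, Pi.smul_apply, smul_eq_mul, he₁z, hv₁']
  have hwj : ∀ j, j ≠ z → (a • e₁ + v₁) j = v₁ j := fun j hj => by
    simp [Pi.add_apply, Pi.smul_apply, smul_eq_mul, he₁j j hj]
  have hwj' : ∀ j, j ≠ z → ((a + 1) • e₁ + v₁) j = v₁ j := fun j hj => by
    simp [Pi.add_apply, Pi.smul_apply, smul_eq_mul, he₁j j hj]
  set Φ : (Fin n → ℕ) → Fin n → ℕ := fun σ j => if σ z = a then σ j + e₁ j else σ j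
    with hΦdef
  have hΦapp : ∀ σ j, Φ σ j = if σ z = a then σ j + e₁ j else σ j := fun σ j => rfl
  have hd'P : ∀ i, d' i ∈ charPoset ((a + 1) • e₁ + v₁) v (g + e₁) := fun i => by
    rw [← hcover]; exact Set.mem_iUnion.mpr ⟨i, Set.mem_Icc.mpr ⟨hcd' i, le_refl _⟩⟩
  have hd'le : ∀ i, d' i z ≤ a + 1 := fun i => by
    have h := hd'P i
    simp only [charPoset, Set.mem_setOf_eq] at h
    have h2 := h.1 z
    rw [hge] at h2
    exact h2
  have hc'le : ∀ i, c' i z ≤ a + 1 := fun i => le_trans (hcd' i z) (hd'le i)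
  have hcapp : ∀ i j, c i j = if c' i z ≤ a then c' i j else c' i j - e₁ j := fun i j => by
    rw [hcz i]; split_ifs <;> rfl
  have hdapp : ∀ i j, d i j = if d' i z < a then d' i j else d' i j - e₁ j := fun i j => by
    rw [hdz i]; split_ifs <;> rfl
  have hdtop : ∀ i, d i z ≤ a := fun i => by
    rw [hdapp, he₁z]
    have := hd'le i
    split_ifs <;> omega
  have keyc : ∀ (i : Fin r) (σ : Fin n → ℕ), σ z ≤ a → ∀ j,
      ((c i j ≤ σ j ∧ σ j ≤ d i j) ↔ (c' i j ≤ Φ σ j ∧ Φ σ j ≤ d' i j)) := by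
    intro i σ hs j
    rcases eq_or_ne j z with hj | hj
    · subst hj
      rw [hcapp, hdapp, hΦapp, he₁z]
      have h1 := hc'le i
      have h2 := hd'le i
      have h3 : c' i z ≤ d' i z := hcd' i z
      split_ifs <;> omega
    · rw [hcapp, hdapp, hΦapp, he₁j j hj]
      simp
  have keyI : ∀ (i : Fin r) (σ : Fin n → ℕ), σ z ≤ a →
      (σ ∈ Set.Icc (c i) (d i) ↔ Φ σ ∈ Set.Icc (c' i) (d' i)) := by
    intro i σ hs
    rw [Set.mem_Icc, Set.mem_Icc]
    constructor
    · rintro ⟨h1, h2⟩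
      exact ⟨fun j => ((keyc i σ hs j).mp ⟨h1 j, h2 j⟩).1,
             fun j => ((keyc i σ hs j).mp ⟨h1 j, h2 j⟩).2⟩
    · rintro ⟨h1, h2⟩
      exact ⟨fun j => ((keyc i σ hs j).mpr ⟨h1 j, h2 j⟩).1,
             fun j => ((keyc i σ hs j).mpr ⟨h1 j, h2 j⟩).2⟩
  have memP : ∀ σ : Fin n → ℕ, σ ∈ charPoset (a • e₁ + v₁) v g ↔
      (σ z ≤ a ∧ Φ σ ∈ charPoset ((a + 1) • e₁ + v₁) v (g + e₁)) := by
    intro σ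
    simp only [charPoset, Set.mem_setOf_eq]
    constructor
    · rintro ⟨hle, hgen⟩
      have hs : σ z ≤ a := by have h : σ z ≤ g z := hle z; rw [hgz] at h; exact h
      refine ⟨hs, ⟨?_, ?_⟩⟩
      · intro j
        have h : σ j ≤ g j := hle j
        rw [hΦapp]
        show _ ≤ g j + e₁ j
        split_ifs <;> omega
      · rcases hgen with hgen | ⟨i, hgen⟩
        · left
          have hsz : σ z = a := by
            have h : (a • e₁ + v₁) z ≤ σ z := hgen z
            rw [hwz] at h; omega
          intro j
          show ((a + 1) • e₁ + v₁) j ≤ Φ σ j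
          rw [hΦapp, if_pos hsz]
          rcases eq_or_ne j z with hj | hj
          · subst hj; rw [hwz', he₁z]; omega
          · rw [hwj' j hj, he₁j j hj]
            have h : (a • e₁ + v₁) j ≤ σ j := hgen j
            rw [hwj j hj] at h; omega
        · right
          refine ⟨i, fun j => ?_⟩
          show v i j ≤ Φ σ j
          have h : v i j ≤ σ j := hgen j
          rw [hΦapp]
          split_ifs <;> omega
    · rintro ⟨hs, hle, hgen⟩
      constructor
      · intro j
        show σ j ≤ g j
        have h : Φ σ j ≤ (g + e₁) j := hle j
        rw [hΦapp] at h
        rcases eq_or_ne j z with hj | hj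
        · subst hj; rw [hgz]; exact hs
        · rw [hgej j hj] at h
          rw [he₁j j hj] at h
          split_ifs at h <;> omega
      · rcases hgen with hgen | ⟨i, hgen⟩
        · left
          have hΦz : ((a + 1) • e₁ + v₁) z ≤ Φ σ z := hgen z
          rw [hwz', hΦapp, he₁z] at hΦz
          have hsz : σ z = a := by split_ifs at hΦz <;> omega
          intro j
          show (a • e₁ + v₁) j ≤ σ j
          rcases eq_or_ne j z with hj | hj
          · subst hj; rw [hwz]; omega
          · have h : ((a + 1) • e₁ + v₁) j ≤ Φ σ j := hgen j
            rw [hwj' j hj, hΦapp, if_pos hsz, he₁j j hj] at h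
            rw [hwj j hj]
            omega
        · right
          refine ⟨i, fun j => ?_⟩
          show v i j ≤ σ j
          have h : v i j ≤ Φ σ j := hgen j
          rw [hΦapp] at h
          rcases eq_or_ne j z with hj | hj
          · subst hj; rw [hv' i]; exact Nat.zero_le _
          · rw [he₁j j hj] at h; split_ifs at h <;> omega
  refine ⟨?_, ?_, ?_⟩
  · ext σ
    simp only [Set.mem_iUnion]
    constructor
    · rintro ⟨i, hi⟩
      have hs : σ z ≤ a := le_trans ((Set.mem_Icc.mp hi).2 z) (hdtop i)
      refine (memP σ).mpr ⟨hs, ?_⟩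
      rw [← hcover]
      exact Set.mem_iUnion.mpr ⟨i, (keyI i σ hs).mp hi⟩
    · intro hσ
      obtain ⟨hs, hΦm⟩ := (memP σ).mp hσ
      rw [← hcover] at hΦm
      obtain ⟨i, hi⟩ := Set.mem_iUnion.mp hΦm
      exact ⟨i, (keyI i σ hs).mpr hi⟩
  · intro i j hij
    have hdd : Disjoint (Set.Icc (c' i) (d' i)) (Set.Icc (c' j) (d' j)) := hdisj hij
    show Disjoint (Set.Icc (c i) (d i)) (Set.Icc (c j) (d j))
    refine Set.disjoint_left.mpr fun σ hi hj => ?_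
    have hs : σ z ≤ a := le_trans ((Set.mem_Icc.mp hi).2 z) (hdtop i)
    exact Set.disjoint_left.mp hdd ((keyI i σ hs).mp hi) ((keyI j σ hs).mp hj)
  · intro i
    have hiff : ∀ j, (d i j = g j ↔ d' i j = (g + e₁) j) := by
      intro j
      rcases eq_or_ne j z with hj | hj
      · subst hj
        rw [hdapp, he₁z, hgz, hge]
        have := hd'le i
        split_ifs <;> omega
      · rw [hdapp, he₁j j hj, hgej j hj]
        simp
    simp only [rho]
    exact congrArg Finset.card (Finset.filter_congr fun j _ => hiff j)
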